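/- arXiv:2411.04564 — 4 statements merged into one kernel-verified Lean document; each statement's English description precedes it below -/
import Mathlib

section
/- For integers l ≥ 2 and d ≥ 2, with τ = l·d + 1, we have (1 - 1/l + d)·(1 - 1/l)^(τ-1) < 1, equivalently 1 - (1 - 1/l)^τ - d·(1 - 1/l)^(τ-1) > 0. -/
/-- For integers `l ≥ 2` and `d ≥ 2`, with `τ = l·d + 1`,
`(1 - 1/l + d)·(1 - 1/l)^(τ-1) < 1`, equivalently
`1 - (1 - 1/l)^τ - d·(1 - 1/l)^(τ-1) > 0`. -/
theorem stmt0 (l d : ℕ) (hl : 2 ≤ l) (hd : 2 ≤ d) (τ : ℕ) (hτ : τ = l * d + 1) :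
    (1 - 1 / (l : ℝ) + (d : ℝ)) * (1 - 1 / (l : ℝ)) ^ (τ - 1) < 1 ∧
    0 < 1 - (1 - 1 / (l : ℝ)) ^ τ - (d : ℝ) * (1 - 1 / (l : ℝ)) ^ (τ - 1) := by
  subst hτ
  have hl2 : (2:ℝ) ≤ (l:ℝ) := by exact_mod_cast hl
  have hd2 : (2:ℝ) ≤ (d:ℝ) := by exact_mod_cast hd
  have hlpos : (0:ℝ) < l := by linarith
  set x : ℝ := 1 - 1/(l:ℝ) with hx
  have hinv : 1/(l:ℝ) ≤ 1/2 := by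
    apply one_div_le_one_div_of_le <;> linarith
  have hx0 : 0 < x := by rw [hx]; linarith
  have hx1 : x < 1 := by
    have : 0 < 1/(l:ℝ) := by positivity
    rw [hx]; linarith
  -- key: x^l < 1/2
  set y : ℝ := 1/((l:ℝ)-1) with hy
  have hl1 : (0:ℝ) < (l:ℝ) - 1 := by linarith
  have hy0 : 0 < y := by positivity
  have hxy : x * (1 + y) = 1 := by
    rw [hx, hy]; field_simp; ring
  have hbern : 1 + (l:ℕ) * y ≤ (1 + y) ^ l := by
    exact one_add_mul_le_pow (by linarith : (-2:ℝ) ≤ y) l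
  have hly : (1:ℝ) < (l:ℝ) * y := by
    rw [hy, mul_one_div, lt_div_iff₀ hl1]
    linarith
  have h2 : (2:ℝ) < (1 + y) ^ l := by
    push_cast at hbern
    linarith
  have hmul : x ^ l * (1 + y) ^ l = 1 := by
    rw [← mul_pow, hxy, one_pow]
  have hkey : x ^ l < 1/2 := by
    nlinarith [pow_pos hx0 l]
  have hpow : x ^ (l * d) < (1/2 : ℝ) ^ d := by
    rw [pow_mul]
    exact pow_lt_pow_left₀ hkey (le_of_lt (pow_pos hx0 l)) (by omega)
  have h2d : (d:ℝ) + 1 ≤ 2 ^ d := by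
    have := @Nat.lt_two_pow_self d
    have : d + 1 ≤ 2 ^ d := this
    exact_mod_cast this
  have hmain : (x + (d:ℝ)) * x ^ (l * d) < 1 := by
    calc (x + (d:ℝ)) * x ^ (l * d) < (x + (d:ℝ)) * (1/2:ℝ)^d := by
          exact mul_lt_mul_of_pos_left hpow (by linarith)
      _ < (1 + (d:ℝ)) * (1/2:ℝ)^d := by
          exact mul_lt_mul_of_pos_right (by linarith) (by positivity)
      _ ≤ (2:ℝ)^d * (1/2:ℝ)^d := by
          exact mul_le_mul_of_nonneg_right (by linarith) (by positivity)
      _ = 1 := by rw [← mul_pow]; norm_num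
  have hτ1 : l * d + 1 - 1 = l * d := by omega
  rw [hτ1]
  constructor
  · exact hmain
  · have hsucc : x ^ (l * d + 1) = x ^ (l * d) * x := pow_succ x (l * d)
    nlinarith [pow_pos hx0 (l*d)]
end

section
/- Let l ≥ 2 be an integer, 0 < ε < 1/e, d ≥ max(⌈1/ε⌉, 2) an integer, and τ = l·d + 1. Then d + 1 > (1/e - (1-1/l)^(τ-1)) / (ε - (1-1/l)^(τ-1)·(1 - 1/e + ε)), where the denominator is positive. -/
/-- Let `l ≥ 2` be an integer, `0 < ε < 1/e`, `d ≥ max(⌈1/ε⌉, 2)` an integer, and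
`τ = l·d + 1`. Then `d + 1 > (1/e - (1-1/l)^(τ-1)) / (ε - (1-1/l)^(τ-1)·(1-1/e+ε))`,
where the denominator is positive. -/
theorem stmt3 (l d : ℕ) (ε : ℝ) (hl : 2 ≤ l) (hε0 : 0 < ε) (hε1 : ε < 1 / Real.exp 1)
    (hd : max ⌈1 / ε⌉₊ 2 ≤ d) (τ : ℕ) (hτ : τ = l * d + 1) :
    0 < ε - (1 - 1 / (l : ℝ)) ^ (τ - 1) * (1 - 1 / Real.exp 1 + ε) ∧
    (1 / Real.exp 1 - (1 - 1 / (l : ℝ)) ^ (τ - 1)) /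
      (ε - (1 - 1 / (l : ℝ)) ^ (τ - 1) * (1 - 1 / Real.exp 1 + ε)) < (d : ℝ) + 1 := by
  have hτ1 : τ - 1 = l * d := by omega
  have hd2 : 2 ≤ d := le_trans (le_max_right _ _) hd
  have hdceil : ⌈1 / ε⌉₊ ≤ d := le_trans (le_max_left _ _) hd
  have hdR : (2:ℝ) ≤ (d:ℝ) := by exact_mod_cast hd2
  have hlR : (2:ℝ) ≤ (l:ℝ) := by exact_mod_cast hl
  have hl0 : (0:ℝ) < l := by linarith
  have hdε : 1 / ε ≤ (d:ℝ) := by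
    have := Nat.ceil_le.mp hdceil
    exact_mod_cast this
  have hεd : 1 ≤ ε * d := by
    rw [div_le_iff₀ hε0] at hdε
    linarith [mul_comm ε (d:ℝ)]
  have he : (2.7182818283:ℝ) < Real.exp 1 := Real.exp_one_gt_d9
  have hepos : (0:ℝ) < Real.exp 1 := Real.exp_pos 1
  have hie : 1 / Real.exp 1 < 1/2 := by
    rw [div_lt_div_iff₀ hepos (by norm_num)]; linarith
  set x : ℝ := (1 - 1 / (l : ℝ)) ^ (τ - 1) with hxdef
  have hb0 : (0:ℝ) ≤ 1 - 1 / (l:ℝ) := by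
    have : 1 / (l:ℝ) ≤ 1/2 := by
      rw [div_le_div_iff₀ hl0 (by norm_num)]; linarith
    linarith
  have hx0 : 0 ≤ x := pow_nonneg hb0 _
  -- x ≤ exp (-d)
  have hxe : x ≤ Real.exp (-(d:ℝ)) := by
    have h1 : 1 - 1 / (l:ℝ) ≤ Real.exp (-(1/(l:ℝ))) := by
      have := Real.add_one_le_exp (-(1/(l:ℝ)))
      linarith
    have h2 : x ≤ (Real.exp (-(1/(l:ℝ)))) ^ (τ - 1) :=
      pow_le_pow_left₀ hb0 h1 _
    have h3 : (Real.exp (-(1/(l:ℝ)))) ^ (τ - 1) = Real.exp (-(d:ℝ)) := by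
      rw [← Real.exp_nat_mul, hτ1]
      congr 1
      push_cast
      field_simp
    rwa [h3] at h2
  -- exp d > 2 d
  have hexp2d : 2 * (d:ℝ) < Real.exp (d:ℝ) := by
    have h1 : (d:ℝ)/2 + 1 < Real.exp ((d:ℝ)/2) := by
      have := Real.add_one_lt_exp (x := (d:ℝ)/2) (by positivity)
      linarith
    have h2 : Real.exp ((d:ℝ)/2) * Real.exp ((d:ℝ)/2) = Real.exp (d:ℝ) := by
      rw [← Real.exp_add]; ring_nf
    nlinarith [Real.exp_pos ((d:ℝ)/2)]
  have hxlt : x < 1 / (2 * (d:ℝ)) := by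
    have h4 : Real.exp (-(d:ℝ)) = 1 / Real.exp (d:ℝ) := by
      rw [Real.exp_neg]; rw [inv_eq_one_div]
    have h5 : 1 / Real.exp (d:ℝ) < 1 / (2 * (d:ℝ)) := by
      apply div_lt_div_of_pos_left one_pos (by linarith) hexp2d
    linarith [hxe, h4 ▸ hxe]
  have hxε : 2 * x < ε := by
    have hd0 : (0:ℝ) < d := by linarith
    have h : x * (2 * (d:ℝ)) < 1 := by
      rw [← lt_div_iff₀ (by linarith)]; exact hxlt
    nlinarith [h, hεd, hd0]
  have hfac : 0 < 1 - 1 / Real.exp 1 + ε ∧ 1 - 1 / Real.exp 1 + ε < 1 := by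
    constructor <;> linarith
  obtain ⟨hf0, hf1⟩ := hfac
  have hxf0 : x * (1 - 1 / Real.exp 1 + ε) ≤ x * 1 :=
    mul_le_mul_of_nonneg_left hf1.le hx0
  have hD : 0 < ε - x * (1 - 1 / Real.exp 1 + ε) := by linarith
  refine ⟨hD, ?_⟩
  rw [div_lt_iff₀ hD]
  -- need: 1/e - x < (d+1) * (ε - x*(1-1/e+ε))
  have h1 : x * (2 * (d:ℝ)) < 1 := by
    rw [← lt_div_iff₀ (by linarith)]; exact hxlt
  have hxf : x * (1 - 1 / Real.exp 1 + ε) ≤ x * 1 :=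
    mul_le_mul_of_nonneg_left hf1.le hx0
  have hA2 : ((d:ℝ)+1) * (x * (1 - 1 / Real.exp 1 + ε)) ≤ ((d:ℝ)+1) * (x * 1) :=
    mul_le_mul_of_nonneg_left hxf (by linarith)
  have hεd2 : 1 ≤ (d:ℝ) * ε := by linarith [mul_comm ε (d:ℝ)]
  linarith [hA2, h1, hεd2, hie, hε0]
end

section
/- Let l ≥ 2, d ≥ 2, τ = l·d + 1 be integers, k, am, mc real numbers with am ≤ k + mc + d·mc and am ≥ k + mc·(1 - (1-1/l)^τ) + d·mc·(1 - (1-1/l)^(τ-1)). Set D := 1 - (1-1/l)^τ + d·(1 - (1-1/l)^(τ-1)). Then (1 - (1-1/l)^(τ-1))·(am - k)/D < mc ≤ (am - k)/D (the strict inequality holding when am > k). -/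
/-- Lemma relating the adoption-maximisation value `am` and maximum-coverage value `mc`:
with `D = 1 - (1-1/l)^τ + d·(1 - (1-1/l)^(τ-1))`,
`(1 - (1-1/l)^(τ-1))·(am-k)/D < mc ≤ (am-k)/D`
(the strict inequality holding when `am > k`, with `mc` nonnegative). -/
theorem stmt4 (l d τ : ℕ) (hl : 2 ≤ l) (hd : 2 ≤ d) (hτ : τ = l * d + 1)
    (k am mc : ℝ) (hmc : 0 ≤ mc)
    (hub : am ≤ k + mc + (d : ℝ) * mc)
    (hlb : k + mc * (1 - (1 - 1 / (l : ℝ)) ^ τ)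
        + (d : ℝ) * mc * (1 - (1 - 1 / (l : ℝ)) ^ (τ - 1)) ≤ am) :
    mc ≤ (am - k) / (1 - (1 - 1 / (l : ℝ)) ^ τ
        + (d : ℝ) * (1 - (1 - 1 / (l : ℝ)) ^ (τ - 1))) ∧
    (k < am →
      (1 - (1 - 1 / (l : ℝ)) ^ (τ - 1)) * (am - k) /
        (1 - (1 - 1 / (l : ℝ)) ^ τ + (d : ℝ) * (1 - (1 - 1 / (l : ℝ)) ^ (τ - 1))) < mc) := by
  have hl2 : (2:ℝ) ≤ (l:ℝ) := by exact_mod_cast hl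
  have hlpos : (0:ℝ) < l := by linarith
  set x : ℝ := 1 - 1 / (l:ℝ) with hxdef
  have hinv : 1 / (l:ℝ) ≤ 1/2 := by
    rw [div_le_div_iff₀ hlpos (by norm_num)]; linarith
  have hx0 : 0 < x := by rw [hxdef]; linarith
  have hx1 : x < 1 := by
    have : 0 < 1 / (l:ℝ) := by positivity
    rw [hxdef]; linarith
  have hτne : τ ≠ 0 := by omega
  have hτ1ne : τ - 1 ≠ 0 := by
    have := Nat.mul_le_mul hl hd; omega
  have h1 : x ^ τ < 1 := pow_lt_one₀ hx0.le hx1 hτne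
  have h2 : x ^ (τ-1) < 1 := pow_lt_one₀ hx0.le hx1 hτ1ne
  have hpowpos : 0 < x ^ (τ-1) := pow_pos hx0 _
  have hxx : x ^ τ = x ^ (τ-1) * x := by
    rw [← pow_succ]; congr 1; omega
  have hd0 : (2:ℝ) ≤ (d:ℝ) := by exact_mod_cast hd
  have hD : 0 < 1 - x ^ τ + (d:ℝ) * (1 - x ^ (τ-1)) := by nlinarith
  constructor
  · rw [le_div_iff₀ hD]; nlinarith
  · intro hk
    rw [div_lt_iff₀ hD]
    have hmcpos : 0 < mc := by nlinarith
    nlinarith [mul_pos (mul_pos hpowpos (sub_pos.mpr hx1)) hmcpos,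
      mul_nonneg (sub_pos.mpr h2).le (by nlinarith : (0:ℝ) ≤ k + mc + (d:ℝ)*mc - am)]
end

section
/- In a strongly connected directed graph with period γ, for any fixed vertex v and any two vertices x, y: γ divides μ(v,x) - μ(v,y) if and only if γ divides μ(x,y), where μ denotes directed shortest-path distance. In other words, the relation ∼_v (congruence of distances from v modulo γ) coincides with the relation ∼ (distance divisible by γ). -/
/-- `DWalk E n u v`: there is a directed walk of length `n` from `u` to `v`. -/
def DWalk {V : Type*} (E : V → V → Prop) : ℕ → V → V → Prop
  | 0, u, v => u = v
  | n + 1, u, v => ∃ w, E u w ∧ DWalk E n w v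

/-- Directed shortest-path distance. -/
noncomputable def ddist {V : Type*} (E : V → V → Prop) (u v : V) : ℕ :=
  sInf {n | DWalk E n u v}

lemma dwalk_trans {V : Type*} {E : V → V → Prop} :
    ∀ {m n : ℕ} {u v w : V}, DWalk E m u v → DWalk E n v w → DWalk E (m + n) u w := by
  intro m
  induction m with
  | zero => intro n u v w h1 h2; cases h1; simpa using h2
  | succ k ih =>
    intro n u v w h1 h2
    obtain ⟨z, hz, hw⟩ := h1
    rw [Nat.succ_add]
    exact show ∃ z', E u z' ∧ DWalk E (k + n) z' w from ⟨z, hz, ih hw h2⟩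

lemma ddist_dwalk {V : Type*} {E : V → V → Prop} (hsc : ∀ u v : V, ∃ n, DWalk E n u v)
    (u v : V) : DWalk E (ddist E u v) u v :=
  Nat.sInf_mem (hsc u v)

/-- In a strongly connected directed graph with period `γ` (gcd of all cycle lengths),
for any fixed vertex `v` and vertices `x, y`: `γ ∣ μ(v,x) - μ(v,y)` iff `γ ∣ μ(x,y)`;
i.e. the relations `∼_v` and `∼` coincide. -/
theorem stmt9 {V : Type*} [Fintype V] (E : V → V → Prop) (γ : ℕ) (hγpos : 0 < γ)
    (hsc : ∀ u v : V, ∃ n, DWalk E n u v)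
    (hγ : ∀ (u : V) (n : ℕ), 0 < n → DWalk E n u u → γ ∣ n) :
    ∀ v x y : V, ((γ : ℤ) ∣ (ddist E v x : ℤ) - (ddist E v y : ℤ)) ↔ γ ∣ ddist E x y := by
  have key : ∀ a b : V, ∀ n : ℕ, DWalk E n a a → γ ∣ n := by
    intro a b n h
    rcases Nat.eq_zero_or_pos n with h0 | hpos
    · simp [h0]
    · exact hγ a n hpos h
  intro v x y
  have h1 : γ ∣ ddist E v x + ddist E x y + ddist E y v := by
    refine key v v _ ?_
    exact dwalk_trans (dwalk_trans (ddist_dwalk hsc v x) (ddist_dwalk hsc x y))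
      (ddist_dwalk hsc y v)
  have h2 : γ ∣ ddist E v y + ddist E y v := by
    refine key v v _ ?_
    exact dwalk_trans (ddist_dwalk hsc v y) (ddist_dwalk hsc y v)
  have h1' : (γ : ℤ) ∣ (ddist E v x : ℤ) + ddist E x y + ddist E y v := by
    exact_mod_cast Int.natCast_dvd_natCast.mpr h1
  have h2' : (γ : ℤ) ∣ (ddist E v y : ℤ) + ddist E y v := by
    exact_mod_cast Int.natCast_dvd_natCast.mpr h2
  constructor
  · intro h
    have : (γ : ℤ) ∣ (ddist E x y : ℤ) := by
      have := (h1'.sub h2').sub h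
      have heq : ((ddist E v x : ℤ) + ddist E x y + ddist E y v) -
          ((ddist E v y : ℤ) + ddist E y v) - ((ddist E v x : ℤ) - ddist E v y)
          = (ddist E x y : ℤ) := by ring
      rwa [heq] at this
    exact_mod_cast this
  · intro h
    have h' : (γ : ℤ) ∣ (ddist E x y : ℤ) := Int.natCast_dvd_natCast.mpr h
    have := (h1'.sub h2').sub h'
    have heq : ((ddist E v x : ℤ) + ddist E x y + ddist E y v) -
        ((ddist E v y : ℤ) + ddist E y v) - (ddist E x y : ℤ)
        = (ddist E v x : ℤ) - ddist E v y := by ring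
    rwa [heq] at this
end
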